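/- For every n ≡ 1 (mod 16) with n ≥ 17, there exists an almost 2-perfect 8-cycle system of order n. -/
import Mathlib


open Finset

/-- The edge set of the closed walk visiting `f 0, f 1, ..., f (m-1)` and back to `f 0`. -/
def cycleEdges {V : Type*} [DecidableEq V] (m : ℕ) (f : ℕ → V) : Finset (Sym2 V) :=
  (Finset.range m).image (fun i => s(f i, f ((i + 1) % m)))

/-- `f` describes an `m`-cycle: its first `m` values are pairwise distinct. -/
def IsCycleMap {V : Type*} (m : ℕ) (f : ℕ → V) : Prop :=
  Set.InjOn f ↑(Finset.range m)

/-- Vertex set of the cycle described by `f`. -/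
def cycleVerts {V : Type*} [DecidableEq V] (m : ℕ) (f : ℕ → V) : Finset V :=
  (Finset.range m).image f

/-- `g` is an inside `m`-cycle of `f`: same vertex set and edge-disjoint. -/
def IsInsideOf {V : Type*} [DecidableEq V] (m : ℕ) (g f : ℕ → V) : Prop :=
  IsCycleMap m g ∧ cycleVerts m g = cycleVerts m f ∧
    Disjoint (cycleEdges m f) (cycleEdges m g)

/-- Edge set of the complete graph on `V`. -/
def kEdges (V : Type*) [Fintype V] [DecidableEq V] : Finset (Sym2 V) :=
  Finset.univ.filter (fun e => ¬ e.IsDiag)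

/-- Edge set of the complete bipartite graph `K_{r,s}`. -/
def bipEdges (r s : ℕ) : Finset (Sym2 (Fin r ⊕ Fin s)) :=
  (Finset.univ : Finset (Fin r × Fin s)).image (fun p => s(Sum.inl p.1, Sum.inr p.2))

/-- `E` admits an almost 2-perfect 8-cycle decomposition. -/
def HasA2PDecomp {V : Type*} [DecidableEq V] (E : Finset (Sym2 V)) : Prop :=
  ∃ (k : ℕ) (c c' : Fin k → ℕ → V),
    (∀ i, IsCycleMap 8 (c i)) ∧
    (∀ i j, i ≠ j → Disjoint (cycleEdges 8 (c i)) (cycleEdges 8 (c j))) ∧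
    Finset.univ.sup (fun i => cycleEdges 8 (c i)) = E ∧
    (∀ i, IsInsideOf 8 (c' i) (c i)) ∧
    (∀ i j, i ≠ j → Disjoint (cycleEdges 8 (c' i)) (cycleEdges 8 (c' j))) ∧
    Finset.univ.sup (fun i => cycleEdges 8 (c' i)) = E

/-- `E` admits an almost 2-perfect 8-cycle packing with leave `L`. -/
def HasA2PPacking {V : Type*} [DecidableEq V] (E L : Finset (Sym2 V)) : Prop :=
  L ⊆ E ∧ ∃ (k : ℕ) (c c' : Fin k → ℕ → V),
    (∀ i, IsCycleMap 8 (c i)) ∧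
    (∀ i j, i ≠ j → Disjoint (cycleEdges 8 (c i)) (cycleEdges 8 (c j))) ∧
    Finset.univ.sup (fun i => cycleEdges 8 (c i)) = E \ L ∧
    (∀ i, IsInsideOf 8 (c' i) (c i)) ∧
    (∀ i j, i ≠ j → Disjoint (cycleEdges 8 (c' i)) (cycleEdges 8 (c' j))) ∧
    Finset.univ.sup (fun i => cycleEdges 8 (c' i)) = E \ L

/-- A 1-factor (perfect matching) as a set of edges. -/
def IsOneFactor {V : Type*} (L : Finset (Sym2 V)) : Prop :=
  (∀ e ∈ L, ¬ e.IsDiag) ∧ ∀ v : V, ∃! e, e ∈ L ∧ v ∈ e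

lemma hasA2PDecomp_empty {V : Type*} [DecidableEq V] : HasA2PDecomp (∅ : Finset (Sym2 V)) := by
  refine ⟨0, fun i => i.elim0, fun i => i.elim0, fun i => i.elim0, fun i => i.elim0, ?_,
    fun i => i.elim0, fun i => i.elim0, ?_⟩ <;> simp

lemma sup_addCases {α : Type*} [SemilatticeSup α] [OrderBot α] {k₁ k₂ : ℕ}
    (f : Fin k₁ → α) (g : Fin k₂ → α) :
    (Finset.univ : Finset (Fin (k₁ + k₂))).sup (Fin.addCases (motive := fun _ => α) f g) =
      Finset.univ.sup f ⊔ Finset.univ.sup g := by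
  apply le_antisymm
  · refine Finset.sup_le fun i _ => ?_
    induction i using Fin.addCases with
    | left i => simpa using le_sup_of_le_left (Finset.le_sup (Finset.mem_univ i))
    | right i => simpa using le_sup_of_le_right (Finset.le_sup (Finset.mem_univ i))
  · refine sup_le ?_ ?_ <;> refine Finset.sup_le fun i _ => ?_
    · simpa using Finset.le_sup (f := Fin.addCases (motive := fun _ => α) f g)
        (Finset.mem_univ (Fin.castAdd k₂ i))
    · simpa using Finset.le_sup (f := Fin.addCases (motive := fun _ => α) f g)
        (Finset.mem_univ (Fin.natAdd k₁ i))

lemma addCases_disj {V : Type*} [DecidableEq V] {k₁ k₂ : ℕ} {E₁ E₂ : Finset (Sym2 V)}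
    (hd : Disjoint E₁ E₂)
    (a₁ : Fin k₁ → ℕ → V) (a₂ : Fin k₂ → ℕ → V)
    (hsa : Finset.univ.sup (fun i => cycleEdges 8 (a₁ i)) = E₁)
    (hsb : Finset.univ.sup (fun i => cycleEdges 8 (a₂ i)) = E₂)
    (hda : ∀ i j, i ≠ j → Disjoint (cycleEdges 8 (a₁ i)) (cycleEdges 8 (a₁ j)))
    (hdb : ∀ i j, i ≠ j → Disjoint (cycleEdges 8 (a₂ i)) (cycleEdges 8 (a₂ j))) :
    ∀ i j : Fin (k₁ + k₂), i ≠ j →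
      Disjoint (cycleEdges 8 (Fin.addCases (motive := fun _ => ℕ → V) a₁ a₂ i))
        (cycleEdges 8 (Fin.addCases (motive := fun _ => ℕ → V) a₁ a₂ j)) := by
  intro i j hij
  have sub1 : ∀ i, cycleEdges 8 (a₁ i) ≤ E₁ := by
    intro i; rw [← hsa]
    exact Finset.le_sup (f := fun i => cycleEdges 8 (a₁ i)) (Finset.mem_univ i)
  have sub2 : ∀ i, cycleEdges 8 (a₂ i) ≤ E₂ := by
    intro i; rw [← hsb]
    exact Finset.le_sup (f := fun i => cycleEdges 8 (a₂ i)) (Finset.mem_univ i)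
  induction i using Fin.addCases with
  | left i =>
    induction j using Fin.addCases with
    | left j =>
      simp only [Fin.addCases_left]
      exact hda i j (fun h => hij (by rw [h]))
    | right j =>
      simp only [Fin.addCases_left, Fin.addCases_right]
      exact hd.mono (sub1 i) (sub2 j)
  | right i =>
    induction j using Fin.addCases with
    | left j =>
      simp only [Fin.addCases_left, Fin.addCases_right]
      exact (hd.mono (sub1 j) (sub2 i)).symm
    | right j =>
      simp only [Fin.addCases_right]
      exact hdb i j (fun h => hij (by rw [h]))

lemma addCases_sup {V : Type*} [DecidableEq V] {k₁ k₂ : ℕ} {E₁ E₂ : Finset (Sym2 V)}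
    (c₁ : Fin k₁ → ℕ → V) (c₂ : Fin k₂ → ℕ → V)
    (hs1 : Finset.univ.sup (fun i => cycleEdges 8 (c₁ i)) = E₁)
    (hs2 : Finset.univ.sup (fun i => cycleEdges 8 (c₂ i)) = E₂) :
    Finset.univ.sup (fun i : Fin (k₁ + k₂) =>
      cycleEdges 8 (Fin.addCases (motive := fun _ => ℕ → V) c₁ c₂ i)) = E₁ ∪ E₂ := by
  rw [show (fun i => cycleEdges 8 (Fin.addCases (motive := fun _ => ℕ → V) c₁ c₂ i)) =
      Fin.addCases (motive := fun _ => Finset (Sym2 V)) (fun i => cycleEdges 8 (c₁ i))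
        (fun i => cycleEdges 8 (c₂ i)) from ?_, sup_addCases, hs1, hs2, Finset.sup_eq_union]
  funext i
  induction i using Fin.addCases with
  | left i => simp
  | right i => simp

lemma decompUnion {V : Type*} [DecidableEq V] {E₁ E₂ : Finset (Sym2 V)}
    (hd : Disjoint E₁ E₂) (h₁ : HasA2PDecomp E₁) (h₂ : HasA2PDecomp E₂) :
    HasA2PDecomp (E₁ ∪ E₂) := by
  obtain ⟨k₁, c₁, c₁', hc1, hd1, hs1, hi1, hd1', hs1'⟩ := h₁
  obtain ⟨k₂, c₂, c₂', hc2, hd2, hs2, hi2, hd2', hs2'⟩ := h₂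
  have A1 : ∀ i : Fin (k₁ + k₂), IsCycleMap 8 (Fin.addCases (motive := fun _ => ℕ → V) c₁ c₂ i) := by
    intro i
    induction i using Fin.addCases with
    | left i => simpa using hc1 i
    | right i => simpa using hc2 i
  have A2 : ∀ i : Fin (k₁ + k₂),
      IsInsideOf 8 (Fin.addCases (motive := fun _ => ℕ → V) c₁' c₂' i)
        (Fin.addCases (motive := fun _ => ℕ → V) c₁ c₂ i) := by
    intro i
    induction i using Fin.addCases with
    | left i => simpa using hi1 i
    | right i => simpa using hi2 i
  exact ⟨k₁ + k₂, _, _, A1, addCases_disj hd c₁ c₂ hs1 hs2 hd1 hd2,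
    addCases_sup c₁ c₂ hs1 hs2, A2, addCases_disj hd c₁' c₂' hs1' hs2' hd1' hd2',
    addCases_sup c₁' c₂' hs1' hs2'⟩

lemma hasA2PDecomp_sup {α V : Type*} [DecidableEq α] [DecidableEq V] (s : Finset α)
    (F : α → Finset (Sym2 V))
    (hdis : ∀ a ∈ s, ∀ b ∈ s, a ≠ b → Disjoint (F a) (F b))
    (h : ∀ a ∈ s, HasA2PDecomp (F a)) : HasA2PDecomp (s.sup F) := by
  induction s using Finset.induction with
  | empty => simpa using hasA2PDecomp_empty
  | @insert a s ha ih =>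
    rw [Finset.sup_insert, Finset.sup_eq_union]
    refine decompUnion ?_ (h a (Finset.mem_insert_self a s)) ?_
    · rw [Finset.disjoint_sup_right]
      intro b hb
      exact hdis a (Finset.mem_insert_self a s) b (Finset.mem_insert_of_mem hb)
        (fun hab => ha (hab ▸ hb))
    · exact ih (fun x hx y hy => hdis x (Finset.mem_insert_of_mem hx) y (Finset.mem_insert_of_mem hy))
        (fun x hx => h x (Finset.mem_insert_of_mem hx))

lemma cycleEdges_comp {V W : Type*} [DecidableEq V] [DecidableEq W] (φ : V → W) (f : ℕ → V) :
    cycleEdges 8 (φ ∘ f) = (cycleEdges 8 f).image (Sym2.map φ) := by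
  unfold cycleEdges
  rw [Finset.image_image]
  rfl

lemma cycleVerts_comp {V W : Type*} [DecidableEq V] [DecidableEq W] (φ : V → W) (f : ℕ → V) :
    cycleVerts 8 (φ ∘ f) = (cycleVerts 8 f).image φ := by
  unfold cycleVerts
  rw [Finset.image_image]

lemma disjoint_sym2_image {V W : Type*} [DecidableEq V] [DecidableEq W] {φ : V → W} {S : Set V}
    (hφ : Set.InjOn φ S) {A B : Finset (Sym2 V)}
    (hA : ∀ e ∈ A, ∀ v ∈ e, v ∈ S) (hB : ∀ e ∈ B, ∀ v ∈ e, v ∈ S)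
    (hAB : Disjoint A B) : Disjoint (A.image (Sym2.map φ)) (B.image (Sym2.map φ)) := by
  rw [Finset.disjoint_left]
  intro e heA heB
  obtain ⟨a, ha, hae⟩ := Finset.mem_image.mp heA
  obtain ⟨b, hb, hbe⟩ := Finset.mem_image.mp heB
  have hab : a = b := by
    induction a using Sym2.ind with
    | _ x y =>
      induction b using Sym2.ind with
      | _ u v =>
        rw [Sym2.map_pair_eq] at hae hbe
        rw [← hbe] at hae
        rw [Sym2.eq_iff] at hae ⊢
        have hx := hA _ ha _ (Sym2.mem_mk_left x y)
        have hy := hA _ ha _ (Sym2.mem_mk_right x y)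
        have hu := hB _ hb _ (Sym2.mem_mk_left u v)
        have hv := hB _ hb _ (Sym2.mem_mk_right u v)
        rcases hae with ⟨h1, h2⟩ | ⟨h1, h2⟩
        · exact Or.inl ⟨hφ hx hu h1, hφ hy hv h2⟩
        · exact Or.inr ⟨hφ hx hv h1, hφ hy hu h2⟩
  exact Finset.disjoint_left.mp hAB ha (hab ▸ hb)

lemma decompImage {V W : Type*} [DecidableEq V] [DecidableEq W] {E : Finset (Sym2 V)}
    {φ : V → W} {S : Set V} (hS : ∀ e ∈ E, ∀ v ∈ e, v ∈ S) (hφ : Set.InjOn φ S)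
    (h : HasA2PDecomp E) : HasA2PDecomp (E.image (Sym2.map φ)) := by
  classical
  obtain ⟨k, c, c', hc, hd, hs, hi, hd', hs'⟩ := h
  have sub : ∀ i, cycleEdges 8 (c i) ⊆ E := by
    intro i; rw [← hs]
    exact Finset.le_sup (f := fun i => cycleEdges 8 (c i)) (Finset.mem_univ i)
  have sub' : ∀ i, cycleEdges 8 (c' i) ⊆ E := by
    intro i; rw [← hs']
    exact Finset.le_sup (f := fun i => cycleEdges 8 (c' i)) (Finset.mem_univ i)
  have hedgeS : ∀ (f : ℕ → V), cycleEdges 8 f ⊆ E → ∀ x < 8, f x ∈ S := by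
    intro f hf x hx
    have : s(f x, f ((x+1)%8)) ∈ cycleEdges 8 f := by
      simp only [cycleEdges, Finset.mem_image, Finset.mem_range]
      exact ⟨x, hx, rfl⟩
    exact hS _ (hf this) _ (Sym2.mem_mk_left _ _)
  have hvS : ∀ i, ∀ x < 8, c i x ∈ S := fun i => hedgeS (c i) (sub i)
  have hvS' : ∀ i, ∀ x < 8, c' i x ∈ S := fun i => hedgeS (c' i) (sub' i)
  have hmaps : ∀ i, Set.MapsTo (c i) ↑(Finset.range 8) S := by
    intro i x hx
    exact hvS i x (by simpa using hx)
  have hmaps' : ∀ i, Set.MapsTo (c' i) ↑(Finset.range 8) S := by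
    intro i x hx
    exact hvS' i x (by simpa using hx)
  have supim : ∀ (a : Fin k → ℕ → V), Finset.univ.sup (fun i => cycleEdges 8 (a i)) = E →
      Finset.univ.sup (fun i => cycleEdges 8 (φ ∘ a i)) = E.image (Sym2.map φ) := by
    intro a ha
    have : ∀ i : Fin k, cycleEdges 8 (φ ∘ a i) = (cycleEdges 8 (a i)).image (Sym2.map φ) :=
      fun i => cycleEdges_comp φ (a i)
    rw [show (fun i => cycleEdges 8 (φ ∘ a i)) =
      (fun i => (cycleEdges 8 (a i)).image (Sym2.map φ)) from funext this]
    rw [← ha]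
    rw [Finset.sup_eq_biUnion, Finset.sup_eq_biUnion, Finset.biUnion_image]
  have edgeSmem : ∀ (f : ℕ → V), cycleEdges 8 f ⊆ E → ∀ e ∈ cycleEdges 8 f, ∀ v ∈ e, v ∈ S :=
    fun f hf e he v hv => hS _ (hf he) _ hv
  refine ⟨k, fun i => φ ∘ c i, fun i => φ ∘ c' i, ?_, ?_, supim c hs, ?_, ?_, supim c' hs'⟩
  · exact fun i => Set.InjOn.comp hφ (hc i) (hmaps i)
  · intro i j hij
    rw [cycleEdges_comp, cycleEdges_comp]
    exact disjoint_sym2_image hφ (edgeSmem _ (sub i)) (edgeSmem _ (sub j)) (hd i j hij)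
  · intro i
    obtain ⟨hcm, hcv, hce⟩ := hi i
    refine ⟨Set.InjOn.comp hφ hcm (hmaps' i), ?_, ?_⟩
    · rw [cycleVerts_comp, cycleVerts_comp, hcv]
    · rw [cycleEdges_comp, cycleEdges_comp]
      exact disjoint_sym2_image hφ (edgeSmem _ (sub i)) (edgeSmem _ (sub' i)) hce
  · intro i j hij
    rw [cycleEdges_comp, cycleEdges_comp]
    exact disjoint_sym2_image hφ (edgeSmem _ (sub' i)) (edgeSmem _ (sub' j)) (hd' i j hij)

/-! ### Numeric master lemma -/

def EdgesDisjNum (f g : ℕ → ℕ) : Prop :=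
  ∀ x < 8, ∀ y < 8, ¬(f x = g y ∧ f ((x+1)%8) = g ((y+1)%8)) ∧
    ¬(f x = g ((y+1)%8) ∧ f ((x+1)%8) = g y)

instance (f g : ℕ → ℕ) : Decidable (EdgesDisjNum f g) := by
  unfold EdgesDisjNum; infer_instance

lemma cycleMap_of_num {f : ℕ → ℕ} (h : ∀ x < 8, ∀ y < 8, f x = f y → x = y) :
    IsCycleMap 8 f := by
  intro x hx y hy hxy
  simp only [Finset.coe_range, Set.mem_Iio] at hx hy
  exact h x hx y hy hxy

lemma disjoint_cycleEdges_of_num {f g : ℕ → ℕ} (h : EdgesDisjNum f g) :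
    Disjoint (cycleEdges 8 f) (cycleEdges 8 g) := by
  rw [Finset.disjoint_left]
  rintro e he hg
  simp only [cycleEdges, Finset.mem_image, Finset.mem_range] at he hg
  obtain ⟨x, hx, rfl⟩ := he
  obtain ⟨y, hy, hxy⟩ := hg
  rw [Sym2.eq_iff] at hxy
  obtain ⟨h1, h2⟩ := h x hx y hy
  rcases hxy with ⟨ha, hb⟩ | ⟨ha, hb⟩
  · exact h1 ⟨ha.symm, hb.symm⟩
  · exact h2 ⟨hb.symm, ha.symm⟩

def pr : ℕ × ℕ → Sym2 ℕ := fun p => s(p.1, p.2)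

lemma master (P : Finset (ℕ × ℕ)) (Q : ℕ → ℕ → Prop) (N : ℕ)
    (hPQ : ∀ x y, (x, y) ∈ P ↔ Q x y)
    (hPN : ∀ p ∈ P, p.1 < N ∧ p.2 < N)
    (k : ℕ) (c c' : ℕ → ℕ → ℕ)
    (H1 : ∀ i < k, ∀ x < 8, ∀ y < 8, c i x = c i y → x = y)
    (H1' : ∀ i < k, ∀ x < 8, ∀ y < 8, c' i x = c' i y → x = y)
    (H2 : ∀ i < k, ∀ j < k, i ≠ j → EdgesDisjNum (c i) (c j))
    (H2' : ∀ i < k, ∀ j < k, i ≠ j → EdgesDisjNum (c' i) (c' j))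
    (H2'' : ∀ i < k, EdgesDisjNum (c i) (c' i))
    (H3 : ∀ i < k, ∀ j < 8, Q (c i j) (c i ((j+1)%8)) ∨ Q (c i ((j+1)%8)) (c i j))
    (H3' : ∀ i < k, ∀ j < 8, Q (c' i j) (c' i ((j+1)%8)) ∨ Q (c' i ((j+1)%8)) (c' i j))
    (H4 : ∀ x < N, ∀ y < N, Q x y → ∃ i < k, ∃ j < 8,
      (x = c i j ∧ y = c i ((j+1)%8)) ∨ (y = c i j ∧ x = c i ((j+1)%8)))
    (H4' : ∀ x < N, ∀ y < N, Q x y → ∃ i < k, ∃ j < 8,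
      (x = c' i j ∧ y = c' i ((j+1)%8)) ∨ (y = c' i j ∧ x = c' i ((j+1)%8)))
    (H5 : ∀ i < k, ∀ x < 8, ∃ y < 8, c' i x = c i y) :
    HasA2PDecomp (P.image pr) := by
  refine ⟨k, fun i => c i.1, fun i => c' i.1, fun i => cycleMap_of_num (H1 i.1 i.2),
    fun i j hij => disjoint_cycleEdges_of_num (H2 i.1 i.2 j.1 j.2 (by simpa [Fin.ext_iff] using hij)),
    ?_, ?_, fun i j hij => disjoint_cycleEdges_of_num (H2' i.1 i.2 j.1 j.2 (by simpa [Fin.ext_iff] using hij)), ?_⟩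
  · apply le_antisymm
    · refine Finset.sup_le fun i _ => ?_
      intro e he
      simp only [cycleEdges, Finset.mem_image, Finset.mem_range] at he
      obtain ⟨j, hj, rfl⟩ := he
      rcases H3 i.1 i.2 j hj with h | h
      · exact Finset.mem_image.mpr ⟨_, (hPQ _ _).mpr h, rfl⟩
      · exact Finset.mem_image.mpr ⟨_, (hPQ _ _).mpr h, Sym2.eq_swap⟩
    · intro e he
      obtain ⟨p, hp, rfl⟩ := Finset.mem_image.mp he
      obtain ⟨hp1, hp2⟩ := hPN p hp
      obtain ⟨i, hi, j, hj, hcase⟩ := H4 p.1 hp1 p.2 hp2 ((hPQ _ _).mp (by simpa using hp))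
      refine Finset.le_sup (f := fun i : Fin k => cycleEdges 8 (c i.1)) (Finset.mem_univ (⟨i, hi⟩ : Fin k)) ?_
      simp only [cycleEdges, Finset.mem_image, Finset.mem_range]
      refine ⟨j, hj, ?_⟩
      rcases hcase with ⟨h1, h2⟩ | ⟨h1, h2⟩
      · rw [pr, h1, h2]
      · rw [pr, h1, h2]; exact Sym2.eq_swap
  · intro i
    refine ⟨cycleMap_of_num (H1' i.1 i.2), ?_, disjoint_cycleEdges_of_num (H2'' i.1 i.2)⟩
    apply Finset.eq_of_subset_of_card_le
    · intro v hv
      simp only [cycleVerts, Finset.mem_image, Finset.mem_range] at hv ⊢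
      obtain ⟨x, hx, rfl⟩ := hv
      obtain ⟨y, hy, hxy⟩ := H5 i.1 i.2 x hx
      exact ⟨y, hy, hxy.symm⟩
    · rw [cycleVerts, cycleVerts,
        Finset.card_image_of_injOn (cycleMap_of_num (H1 i.1 i.2)),
        Finset.card_image_of_injOn (cycleMap_of_num (H1' i.1 i.2))]
  · apply le_antisymm
    · refine Finset.sup_le fun i _ => ?_
      intro e he
      simp only [cycleEdges, Finset.mem_image, Finset.mem_range] at he
      obtain ⟨j, hj, rfl⟩ := he
      rcases H3' i.1 i.2 j hj with h | h
      · exact Finset.mem_image.mpr ⟨_, (hPQ _ _).mpr h, rfl⟩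
      · exact Finset.mem_image.mpr ⟨_, (hPQ _ _).mpr h, Sym2.eq_swap⟩
    · intro e he
      obtain ⟨p, hp, rfl⟩ := Finset.mem_image.mp he
      obtain ⟨hp1, hp2⟩ := hPN p hp
      obtain ⟨i, hi, j, hj, hcase⟩ := H4' p.1 hp1 p.2 hp2 ((hPQ _ _).mp (by simpa using hp))
      refine Finset.le_sup (f := fun i : Fin k => cycleEdges 8 (c' i.1)) (Finset.mem_univ (⟨i, hi⟩ : Fin k)) ?_
      simp only [cycleEdges, Finset.mem_image, Finset.mem_range]
      refine ⟨j, hj, ?_⟩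
      rcases hcase with ⟨h1, h2⟩ | ⟨h1, h2⟩
      · rw [pr, h1, h2]
      · rw [pr, h1, h2]; exact Sym2.eq_swap

/-! ### Generic membership lemmas -/

lemma mem_pr_image {P : Finset (ℕ × ℕ)} {x y : ℕ} :
    s(x, y) ∈ P.image pr ↔ (x, y) ∈ P ∨ (y, x) ∈ P := by
  constructor
  · intro h
    obtain ⟨⟨a, b⟩, hab, h⟩ := Finset.mem_image.mp h
    rw [pr, Sym2.eq_iff] at h
    rcases h with ⟨h1, h2⟩ | ⟨h1, h2⟩
    · subst h1; subst h2; exact Or.inl hab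
    · subst h1; subst h2; exact Or.inr hab
  · rintro (h | h)
    · exact Finset.mem_image.mpr ⟨(x, y), h, rfl⟩
    · exact Finset.mem_image.mpr ⟨(y, x), h, Sym2.eq_swap⟩

def pcs (P : Finset (ℕ × ℕ)) (φ : ℕ → ℕ) : Finset (Sym2 ℕ) :=
  (P.image pr).image (Sym2.map φ)

lemma mem_pcs {P : Finset (ℕ × ℕ)} {φ : ℕ → ℕ} {x y : ℕ} :
    s(x, y) ∈ pcs P φ ↔ ∃ p ∈ P, (φ p.1 = x ∧ φ p.2 = y) ∨ (φ p.1 = y ∧ φ p.2 = x) := by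
  constructor
  · intro h
    obtain ⟨e, he, hef⟩ := Finset.mem_image.mp h
    induction e using Sym2.ind with
    | _ a b =>
      rw [Sym2.map_pair_eq, Sym2.eq_iff] at hef
      rcases mem_pr_image.mp he with hp | hp
      · exact ⟨(a, b), hp, by tauto⟩
      · exact ⟨(b, a), hp, by simp only; tauto⟩
  · rintro ⟨p, hp, h⟩
    apply Finset.mem_image.mpr
    refine ⟨s(p.1, p.2), mem_pr_image.mpr (Or.inl (by simpa using hp)), ?_⟩
    rw [Sym2.map_pair_eq]
    rcases h with ⟨h1, h2⟩ | ⟨h1, h2⟩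
    · rw [h1, h2]
    · rw [h1, h2]; exact Sym2.eq_swap

lemma pr_endpoints {P : Finset (ℕ × ℕ)} {S : Set ℕ} (h : ∀ p ∈ P, p.1 ∈ S ∧ p.2 ∈ S) :
    ∀ e ∈ P.image pr, ∀ v ∈ e, v ∈ S := by
  intro e he v hv
  obtain ⟨p, hp, rfl⟩ := Finset.mem_image.mp he
  rw [pr] at hv
  rcases Sym2.mem_iff.mp hv with h1 | h1
  · exact h1 ▸ (h p hp).1
  · exact h1 ▸ (h p hp).2

lemma sym2_disjoint_of {A B : Finset (Sym2 ℕ)}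
    (h : ∀ x y, s(x, y) ∈ A → s(x, y) ∈ B → False) : Disjoint A B := by
  rw [Finset.disjoint_left]
  intro e
  induction e using Sym2.ind with
  | _ x y => exact fun he he' => h x y he he'

/-! ### Concrete edge sets -/

def PN (n : ℕ) : Finset (ℕ × ℕ) := ((Finset.range n) ×ˢ (Finset.range n)).filter (fun p => p.1 < p.2)
def EN (n : ℕ) : Finset (Sym2 ℕ) := (PN n).image pr
def P44 : Finset (ℕ × ℕ) := ((Finset.range 8) ×ˢ (Finset.range 8)).filter (fun p => p.1 < 4 ∧ 4 ≤ p.2)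
def E44 : Finset (Sym2 ℕ) := P44.image pr
def PB : Finset (ℕ × ℕ) := ((Finset.range 32) ×ˢ (Finset.range 32)).filter (fun p => p.1 < 16 ∧ 16 ≤ p.2)
def EB : Finset (Sym2 ℕ) := PB.image pr

lemma mem_PN {n x y : ℕ} : (x, y) ∈ PN n ↔ x < n ∧ y < n ∧ x < y := by
  simp [PN, and_assoc]

lemma mem_EN {n x y : ℕ} : s(x, y) ∈ EN n ↔ x < n ∧ y < n ∧ x ≠ y := by
  rw [EN, mem_pr_image, mem_PN, mem_PN]
  omega

lemma mem_PB {x y : ℕ} : (x, y) ∈ PB ↔ x < 16 ∧ 16 ≤ y ∧ y < 32 := by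
  simp [PB, and_assoc]; omega

lemma mem_EB {x y : ℕ} : s(x, y) ∈ EB ↔
    (x < 16 ∧ 16 ≤ y ∧ y < 32) ∨ (y < 16 ∧ 16 ≤ x ∧ x < 32) := by
  rw [EB, mem_pr_image, mem_PB, mem_PB]

lemma mem_P44 {x y : ℕ} : (x, y) ∈ P44 ↔ x < 4 ∧ 4 ≤ y ∧ y < 8 := by
  simp [P44, and_assoc]; omega

lemma EN_endpoints {n : ℕ} : ∀ e ∈ EN n, ∀ v ∈ e, v ∈ {z : ℕ | z < n} :=
  pr_endpoints (fun p hp => by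
    obtain ⟨h1, h2, _⟩ := mem_PN.mp (by simpa using hp); exact ⟨h1, h2⟩)

lemma E44_endpoints : ∀ e ∈ E44, ∀ v ∈ e, v ∈ {z : ℕ | z < 8} :=
  pr_endpoints (fun p hp => by
    have := mem_P44.mp (by simpa using hp); simp only [Set.mem_setOf_eq]; omega)

lemma EB_endpoints : ∀ e ∈ EB, ∀ v ∈ e, v ∈ {z : ℕ | z < 32} :=
  pr_endpoints (fun p hp => by
    have := mem_PB.mp (by simpa using hp); simp only [Set.mem_setOf_eq]; omega)
def d17 : List (List Nat) := [[0, 1, 3, 6, 2, 7, 16, 10], [1, 2, 4, 7, 3, 8, 0, 11], [2, 3, 5, 8, 4, 9, 1, 12], [3, 4, 6, 9, 5, 10, 2, 13], [4, 5, 7, 10, 6, 11, 3, 14], [5, 6, 8, 11, 7, 12, 4, 15], [6, 7, 9, 12, 8, 13, 5, 16], [7, 8, 10, 13, 9, 14, 6, 0], [8, 9, 11, 14, 10, 15, 7, 1], [9, 10, 12, 15, 11, 16, 8, 2], [10, 11, 13, 16, 12, 0, 9, 3], [11, 12, 14, 0, 13, 1, 10, 4], [12, 13, 15, 1, 14, 2,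 11, 5], [13, 14, 16, 2, 15, 3, 12, 6], [14, 15, 0, 3, 16, 4, 13, 7], [15, 16, 1, 4, 0, 5, 14, 8], [16, 0, 2, 5, 1, 6, 15, 9]]
def d17i : List (List Nat) := [[0, 6, 1, 16, 3, 2, 10, 7], [1, 7, 2, 0, 4, 3, 11, 8], [2, 8, 3, 1, 5, 4, 12, 9], [3, 9, 4, 2, 6, 5, 13, 10], [4, 10, 5, 3, 7, 6, 14, 11], [5, 11, 6, 4, 8, 7, 15, 12], [6, 12, 7, 5, 9, 8, 16, 13], [7, 13, 8, 6, 10, 9, 0, 14], [8, 14, 9, 7, 11, 10, 1, 15], [9, 15, 10, 8, 12, 11, 2, 16], [10, 16, 11, 9, 13, 12, 3, 0], [11, 0, 12, 10, 14, 13, 4, 1], [12, 1, 13, 11, 15, 14, 5, 2], [13, 2, 14, 12, 16, 15, 6, 3], [14, 3, 15, 13, 0, 16, 7, 4], [15, 4, 16, 14, 1, 0, 8, 5], [16, 5, 0, 15, 2, 1, 9, 6]]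
def db : List (List Nat) := [[0, 16, 1, 17, 2, 18, 3, 19], [0, 18, 1, 19, 2, 16, 3, 17], [0, 20, 1, 21, 2, 22, 3, 23], [0, 22, 1, 23, 2, 20, 3, 21], [0, 24, 1, 25, 2, 26, 3, 27], [0, 26, 1, 27, 2, 24, 3, 25], [0, 28, 1, 29, 2, 30, 3, 31], [0, 30, 1, 31, 2, 28, 3, 29], [4, 16, 5, 17, 6, 18, 7, 19], [4, 18, 5, 19, 6, 16, 7, 17], [4, 20, 5, 21, 6, 22, 7, 23], [4, 22, 5, 23, 6, 20, 7, 21], [4, 24, 5, 25, 6, 26, 7, 27], [4, 26, 5, 27, 6, 24, 7, 25], [4, 28, 5, 29, 6, 30, 7, 31], [4, 30, 5, 31, 6, 28, 7, 29], [8, 16, 9, 17, 10, 18, 11, 19], [8, 18, 9, 19, 10, 16, 11, 17], [8, 20, 9, 21, 10, 22, 11, 23], [8, 22, 9, 23, 10, 20, 11, 21], [8, 24, 9, 25, 10, 26, 11, 27], [8, 26, 9, 27, 10, 24, 11, 25], [8, 28, 9, 29, 10, 30, 11, 31], [8, 30, 9, 31, 10, 28, 11, 29], [12, 16, 13, 17,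 14, 18, 15, 19], [12, 18, 13, 19, 14, 16, 15, 17], [12, 20, 13, 21, 14, 22, 15, 23], [12, 22, 13, 23, 14, 20, 15, 21], [12, 24, 13, 25, 14, 26, 15, 27], [12, 26, 13, 27, 14, 24, 15, 25], [12, 28, 13, 29, 14, 30, 15, 31], [12, 30, 13, 31, 14, 28, 15, 29]]
def dbi : List (List Nat) := [[0, 18, 1, 19, 2, 16, 3, 17], [0, 16, 1, 17, 2, 18, 3, 19], [0, 22, 1, 23, 2, 20, 3, 21], [0, 20, 1, 21, 2, 22, 3, 23], [0, 26, 1, 27, 2, 24, 3, 25], [0, 24, 1, 25, 2, 26, 3, 27], [0, 30, 1, 31, 2, 28, 3, 29], [0, 28, 1, 29, 2, 30, 3, 31], [4, 18, 5, 19, 6, 16, 7, 17], [4, 16, 5, 17, 6, 18, 7, 19], [4, 22, 5, 23, 6, 20, 7, 21], [4, 20, 5, 21, 6, 22, 7, 23], [4, 26, 5, 27, 6, 24, 7, 25], [4, 24, 5, 25, 6, 26, 7, 27], [4, 30, 5, 31, 6, 28, 7, 29], [4, 28, 5, 29, 6, 30, 7, 31], [8, 18, 9, 19, 10, 16, 11,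 17], [8, 16, 9, 17, 10, 18, 11, 19], [8, 22, 9, 23, 10, 20, 11, 21], [8, 20, 9, 21, 10, 22, 11, 23], [8, 26, 9, 27, 10, 24, 11, 25], [8, 24, 9, 25, 10, 26, 11, 27], [8, 30, 9, 31, 10, 28, 11, 29], [8, 28, 9, 29, 10, 30, 11, 31], [12, 18, 13, 19, 14, 16, 15, 17], [12, 16, 13, 17, 14, 18, 15, 19], [12, 22, 13, 23, 14, 20, 15, 21], [12, 20, 13, 21, 14, 22, 15, 23], [12, 26, 13, 27, 14, 24, 15, 25], [12, 24, 13, 25, 14, 26, 15, 27], [12, 30, 13, 31, 14, 28, 15, 29], [12, 28, 13, 29, 14, 30, 15, 31]]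

def d44 : List (List Nat) := [[0, 4, 1, 5, 2, 6, 3, 7], [0, 6, 1, 7, 2, 4, 3, 5]]
def d44i : List (List Nat) := [[0, 6, 1, 7, 2, 4, 3, 5], [0, 4, 1, 5, 2, 6, 3, 7]]

def look (d : List (List Nat)) : ℕ → ℕ → ℕ := fun i j => (d.getD i []).getD j 0

set_option maxRecDepth 100000 in
set_option maxHeartbeats 4000000 in
set_option synthInstance.maxSize 1000 in
set_option synthInstance.maxHeartbeats 1000000 in
lemma F17 : HasA2PDecomp (EN 17) := by
  refine master (PN 17) (fun x y => x < y ∧ y < 17) 17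
    (fun x y => by rw [mem_PN]; omega)
    (fun p hp => by have := mem_PN.mp (by simpa using hp); omega)
    17 (look d17) (look d17i) ?_ ?_ ?_ ?_ ?_ ?_ ?_ ?_ ?_ ?_ <;> (beta_reduce; decide)

set_option maxRecDepth 100000 in
set_option maxHeartbeats 4000000 in
set_option synthInstance.maxSize 1000 in
set_option synthInstance.maxHeartbeats 1000000 in
lemma F44 : HasA2PDecomp E44 := by
  refine master P44 (fun x y => x < 4 ∧ 4 ≤ y ∧ y < 8) 8
    (fun x y => by rw [mem_P44])
    (fun p hp => by have := mem_P44.mp (by simpa using hp); omega)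
    2 (look d44) (look d44i) ?_ ?_ ?_ ?_ ?_ ?_ ?_ ?_ ?_ ?_ <;> (beta_reduce; decide)

/-! ### K_{16,16} from K_{4,4} blocks -/

def φ44 (p q : ℕ) : ℕ → ℕ := fun x => if x < 4 then 4*p + x else 12 + 4*q + x

def blockB (p q : ℕ) : Finset (Sym2 ℕ) := pcs P44 (φ44 p q)

lemma mem_blockB {p q x y : ℕ} : s(x, y) ∈ blockB p q ↔
    ((4*p ≤ x ∧ x < 4*p+4 ∧ 16+4*q ≤ y ∧ y < 16+4*q+4) ∨
     (4*p ≤ y ∧ y < 4*p+4 ∧ 16+4*q ≤ x ∧ x < 16+4*q+4)) := by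
  rw [blockB, mem_pcs]
  constructor
  · rintro ⟨⟨a, b⟩, hab, h⟩
    rw [mem_P44] at hab
    simp only [φ44] at h
    split_ifs at h <;> omega
  · intro h
    rcases h with h | h
    · refine ⟨(x - 4*p, y - 12 - 4*q), mem_P44.mpr (by omega), Or.inl ?_⟩
      simp only [φ44]
      split_ifs <;> omega
    · refine ⟨(y - 4*p, x - 12 - 4*q), mem_P44.mpr (by omega), Or.inr ?_⟩
      simp only [φ44]
      split_ifs <;> omega

lemma EB_eq : EB = ((Finset.range 4) ×ˢ (Finset.range 4)).sup (fun pq => blockB pq.1 pq.2) := by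
  ext e
  induction e using Sym2.ind with
  | _ x y =>
    rw [mem_EB, Finset.mem_sup]
    constructor
    · intro h
      rcases h with ⟨h1, h2, h3⟩ | ⟨h1, h2, h3⟩
      · exact ⟨(x/4, (y-16)/4), by simp [Finset.mem_product]; omega,
          mem_blockB.mpr (Or.inl (by omega))⟩
      · exact ⟨(y/4, (x-16)/4), by simp [Finset.mem_product]; omega,
          mem_blockB.mpr (Or.inr (by omega))⟩
    · rintro ⟨⟨p, q⟩, hpq, h⟩
      simp only [Finset.mem_product, Finset.mem_range] at hpq
      rw [mem_blockB] at h
      omega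

lemma FB : HasA2PDecomp EB := by
  rw [EB_eq]
  apply hasA2PDecomp_sup
  · rintro ⟨p, q⟩ hpq ⟨p', q'⟩ hpq' hne
    simp only [Finset.mem_product, Finset.mem_range] at hpq hpq'
    apply sym2_disjoint_of
    intro x y h1 h2
    rw [mem_blockB] at h1 h2
    have : ¬(p = p' ∧ q = q') := by simpa [Prod.ext_iff] using hne
    omega
  · rintro ⟨p, q⟩ hpq
    simp only [Finset.mem_product, Finset.mem_range] at hpq
    refine decompImage (S := {z : ℕ | z < 8}) E44_endpoints ?_ F44
    intro a ha b hb h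
    simp only [Set.mem_setOf_eq] at ha hb
    simp only [φ44] at h
    split_ifs at h <;> omega

/-! ### The pieces of the inductive step -/

def φ17 (t : ℕ) : ℕ → ℕ := fun x => if x = 0 then 0 else 16*t + x

def piece17 (t : ℕ) : Finset (Sym2 ℕ) := pcs (PN 17) (φ17 t)

lemma mem_piece17 {t x y : ℕ} : s(x, y) ∈ piece17 t ↔
    ((x = 0 ∨ (16*t+1 ≤ x ∧ x < 16*t+17)) ∧ (y = 0 ∨ (16*t+1 ≤ y ∧ y < 16*t+17)) ∧ x ≠ y) := by
  rw [piece17, mem_pcs]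
  constructor
  · rintro ⟨⟨a, b⟩, hab, h⟩
    rw [mem_PN] at hab
    simp only [φ17] at h
    split_ifs at h <;> omega
  · rintro ⟨hx, hy, hxy⟩
    rcases hx with rfl | hx
    · rcases hy with rfl | hy
      · omega
      · refine ⟨(0, y - 16*t), mem_PN.mpr (by omega), Or.inl ?_⟩
        simp only [φ17]
        split_ifs <;> omega
    · rcases hy with rfl | hy
      · refine ⟨(0, x - 16*t), mem_PN.mpr (by omega), Or.inr ?_⟩
        simp only [φ17]
        split_ifs <;> omega
      · rcases Nat.lt_or_ge x y with hlt | hge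
        · refine ⟨(x - 16*t, y - 16*t), mem_PN.mpr (by omega), Or.inl ?_⟩
          simp only [φ17]
          split_ifs <;> omega
        · refine ⟨(y - 16*t, x - 16*t), mem_PN.mpr (by omega), Or.inr ?_⟩
          simp only [φ17]
          split_ifs <;> omega

def ψB (j t : ℕ) : ℕ → ℕ := fun x => if x < 16 then 16*j + 1 + x else 16*t + 1 + (x - 16)

def pieceB (j t : ℕ) : Finset (Sym2 ℕ) := pcs PB (ψB j t)

lemma mem_pieceB {j t x y : ℕ} : s(x, y) ∈ pieceB j t ↔
    ((16*j+1 ≤ x ∧ x < 16*j+17 ∧ 16*t+1 ≤ y ∧ y < 16*t+17) ∨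
     (16*j+1 ≤ y ∧ y < 16*j+17 ∧ 16*t+1 ≤ x ∧ x < 16*t+17)) := by
  rw [pieceB, mem_pcs]
  constructor
  · rintro ⟨⟨a, b⟩, hab, h⟩
    rw [mem_PB] at hab
    simp only [ψB] at h
    split_ifs at h <;> omega
  · intro h
    rcases h with h | h
    · refine ⟨(x - (16*j+1), 16 + (y - (16*t+1))), mem_PB.mpr (by omega), Or.inl ?_⟩
      simp only [ψB]
      split_ifs <;> omega
    · refine ⟨(y - (16*j+1), 16 + (x - (16*t+1))), mem_PB.mpr (by omega), Or.inr ?_⟩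
      simp only [ψB]
      split_ifs <;> omega

lemma piece17_decomp (t : ℕ) : HasA2PDecomp (piece17 t) := by
  refine decompImage (S := {z : ℕ | z < 17}) EN_endpoints ?_ F17
  intro a ha b hb h
  simp only [Set.mem_setOf_eq] at ha hb
  simp only [φ17] at h
  split_ifs at h <;> omega

lemma pieceB_decomp (j t : ℕ) (hjt : j < t) : HasA2PDecomp (pieceB j t) := by
  refine decompImage (S := {z : ℕ | z < 32}) EB_endpoints ?_ FB
  intro a ha b hb h
  simp only [Set.mem_setOf_eq] at ha hb
  simp only [ψB] at h
  split_ifs at h <;> omega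

/-! ### Inductive step -/

lemma step_eq (t : ℕ) : EN (16*t+17) =
    (EN (16*t+1) ∪ piece17 t) ∪ (Finset.range t).sup (fun j => pieceB j t) := by
  ext e
  induction e using Sym2.ind with
  | _ x y =>
    simp only [Finset.mem_union, Finset.mem_sup, Finset.mem_range, mem_EN, mem_piece17, mem_pieceB]
    constructor
    · rintro ⟨hx, hy, hxy⟩
      by_cases hx1 : x < 16*t+1
      · by_cases hy1 : y < 16*t+1
        · exact Or.inl (Or.inl ⟨hx1, hy1, hxy⟩)
        · -- y is new
          by_cases hx0 : x = 0
          · exact Or.inl (Or.inr (by omega))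
          · refine Or.inr ⟨(x-1)/16, by omega, Or.inl (by omega)⟩
      · by_cases hy1 : y < 16*t+1
        · by_cases hy0 : y = 0
          · exact Or.inl (Or.inr (by omega))
          · refine Or.inr ⟨(y-1)/16, by omega, Or.inr (by omega)⟩
        · exact Or.inl (Or.inr (by omega))
    · rintro ((h | h) | ⟨j, hj, h⟩) <;> omega

lemma step_disj1 (t : ℕ) : Disjoint (EN (16*t+1)) (piece17 t) := by
  apply sym2_disjoint_of
  intro x y h1 h2
  rw [mem_EN] at h1
  rw [mem_piece17] at h2
  omega

lemma step_disj2 (t : ℕ) :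
    Disjoint (EN (16*t+1) ∪ piece17 t) ((Finset.range t).sup (fun j => pieceB j t)) := by
  rw [Finset.disjoint_sup_right]
  intro j hj
  rw [Finset.mem_range] at hj
  rw [Finset.disjoint_union_left]
  constructor
  · apply sym2_disjoint_of
    intro x y h1 h2
    rw [mem_EN] at h1
    rw [mem_pieceB] at h2
    omega
  · apply sym2_disjoint_of
    intro x y h1 h2
    rw [mem_piece17] at h1
    rw [mem_pieceB] at h2
    omega

lemma step_disj3 (t : ℕ) : ∀ j ∈ Finset.range t, ∀ j' ∈ Finset.range t, j ≠ j' →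
    Disjoint (pieceB j t) (pieceB j' t) := by
  intro j hj j' hj' hne
  rw [Finset.mem_range] at hj hj'
  apply sym2_disjoint_of
  intro x y h1 h2
  rw [mem_pieceB] at h1 h2
  omega

lemma mainN : ∀ t : ℕ, HasA2PDecomp (EN (16*t+1)) := by
  intro t
  induction t with
  | zero =>
    have : EN (16*0+1) = ∅ := by
      ext e
      induction e using Sym2.ind with
      | _ x y => simp only [mem_EN, Finset.notMem_empty, iff_false]; omega
    rw [this]
    exact hasA2PDecomp_empty
  | succ t ih =>
    have h17 : 16*(t+1)+1 = 16*t+17 := by ring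
    rw [h17, step_eq]
    refine decompUnion (step_disj2 t) (decompUnion (step_disj1 t) ih (piece17_decomp t)) ?_
    refine hasA2PDecomp_sup _ _ (step_disj3 t) ?_
    intro j hj
    exact pieceB_decomp j t (Finset.mem_range.mp hj)

/-! ### Final transfer to `Fin n` -/

/-- For every `n ≡ 1 (mod 16)`, `n ≥ 17`, there is an A2P 8-cycle system of order `n`. -/
theorem a2p_system_1mod16 (n : ℕ) (h1 : n % 16 = 1) (h17 : 17 ≤ n) :
    HasA2PDecomp (kEdges (Fin n)) := by
  have hn : n = 16*(n/16)+1 := by omega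
  have hEN : HasA2PDecomp (EN n) := by rw [hn]; exact mainN (n/16)
  have hn0 : 0 < n := by omega
  set φ : ℕ → Fin n := fun x => ⟨x % n, Nat.mod_lt _ hn0⟩ with hφ
  have hinj : Set.InjOn φ {z : ℕ | z < n} := by
    intro a ha b hb h
    simp only [Set.mem_setOf_eq] at ha hb
    have := congrArg Fin.val h
    simpa [hφ, Nat.mod_eq_of_lt ha, Nat.mod_eq_of_lt hb] using this
  have him := decompImage (S := {z : ℕ | z < n}) EN_endpoints hinj hEN
  have heq : (EN n).image (Sym2.map φ) = kEdges (Fin n) := by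
    ext e
    induction e using Sym2.ind with
    | _ a b =>
      simp only [kEdges, Finset.mem_filter, Finset.mem_univ, true_and]
      rw [Sym2.mk_isDiag_iff]
      constructor
      · intro h
        obtain ⟨e', he', hmap⟩ := Finset.mem_image.mp h
        induction e' using Sym2.ind with
        | _ u v =>
          rw [mem_EN] at he'
          rw [Sym2.map_pair_eq, Sym2.eq_iff] at hmap
          have : φ u ≠ φ v := fun hc => he'.2.2 (hinj he'.1 he'.2.1 hc)
          intro hab
          rcases hmap with ⟨hu, hv⟩ | ⟨hu, hv⟩ <;> rw [← hu, ← hv] at hab <;>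
            [exact this hab; exact this hab.symm]
      · intro hab
        apply Finset.mem_image.mpr
        refine ⟨s(a.val, b.val), mem_EN.mpr ⟨a.isLt, b.isLt, fun h => hab (Fin.ext h)⟩, ?_⟩
        rw [Sym2.map_pair_eq]
        have ha : φ a.val = a := Fin.ext (by simp [hφ, Nat.mod_eq_of_lt a.isLt])
        have hb : φ b.val = b := Fin.ext (by simp [hφ, Nat.mod_eq_of_lt b.isLt])
        rw [ha, hb]
  rw [← heq]
  exact him
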